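/- For every legal plan P from the initial state I of an MA-STRIPS problem Π, there exists a legal plan P' from I that is a permutation of P (it consists of exactly the same actions, possibly in a different order), produces the same final state from I as P, has the same cost as P, and satisfies the Corollary-1 restrictions. -/

import Mathlib

/-- A STRIPS action over a set of propositions `P`. -/
structure StripsAction (P : Type*) where
  pre : Set P
  add : Set P
  del : Set P

namespace StripsAction

variable {P : Type*}

/-- The variable set of an action: all propositions it mentions. -/
def varset (a : StripsAction P) : Set P := a.pre ∪ a.add ∪ a.del

/-- An action is applicable in state `s` iff its preconditions hold in `s`. -/
def Applicable (a : StripsAction P) (s : Set P) : Prop := a.pre ⊆ s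

/-- Applying an action to a state: `a(s) = (s \ del(a)) ∪ add(a)`. -/
def apply (a : StripsAction P) (s : Set P) : Set P := (s \ a.del) ∪ a.add

end StripsAction

/-- The state obtained by applying a sequence of actions in order. -/
def applySeq {P : Type*} : List (StripsAction P) → Set P → Set P
  | [], s => s
  | a :: rest, s => applySeq rest (a.apply s)

/-- A sequence of actions is a legal plan from `s` iff each action is applicable in the
state obtained by applying the previous ones in order. -/
def LegalPlan {P : Type*} : List (StripsAction P) → Set P → Prop
  | [], _ => True
  | a :: rest, s => a.Applicable s ∧ LegalPlan rest (a.apply s)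

/-- An MA-STRIPS problem: pairwise-disjoint finite action sets `A i` (one per agent),
an initial state and a goal. -/
structure MAProblem (P Ag : Type*) where
  A : Ag → Set (StripsAction P)
  disjoint : ∀ i j : Ag, i ≠ j → Disjoint (A i) (A j)
  finite : ∀ i : Ag, (A i).Finite
  I : Set P
  G : Set P

namespace MAProblem

variable {P Ag : Type*}

/-- Proposition `p` is private to agent `i` iff every action mentioning `p` belongs to
`A i`. -/
def PrivateProp (pb : MAProblem P Ag) (p : P) (i : Ag) : Prop :=
  ∀ j : Ag, ∀ a ∈ pb.A j, p ∈ a.varset → j = i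

/-- An action `a ∈ A i` is private iff every proposition it mentions is private to `i`. -/
def PrivateAction (pb : MAProblem P Ag) (a : StripsAction P) (i : Ag) : Prop :=
  a ∈ pb.A i ∧ ∀ p ∈ a.varset, pb.PrivateProp p i

/-- An action of the problem is public iff it is not private. -/
def PublicAction (pb : MAProblem P Ag) (a : StripsAction P) : Prop :=
  (∃ i, a ∈ pb.A i) ∧ ∀ i : Ag, ¬ pb.PrivateAction a i

end MAProblem

/-- The cost of a plan is the sum of the costs of its actions. -/
def planCost {P : Type*} (cost : StripsAction P → ℝ) (L : List (StripsAction P)) : ℝ :=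
  (L.map cost).sum

/-- The Corollary-1 restrictions on a plan: (1) all actions up to and including the first
public action belong to one agent; (2) for every pair of consecutive public actions
`a_i, a_j` (no public action strictly in between), all actions `a_l` with `i < l ≤ j`
belong to one agent. -/
def Restrictions {P Ag : Type*} (pb : MAProblem P Ag) (L : List (StripsAction P)) : Prop :=
  (∀ i : Fin L.length, pb.PublicAction (L.get i) →
      (∀ l : Fin L.length, l < i → ¬ pb.PublicAction (L.get l)) →
      ∃ ag : Ag, ∀ l : Fin L.length, l ≤ i → L.get l ∈ pb.A ag) ∧
  (∀ i j : Fin L.length, i < j →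
      pb.PublicAction (L.get i) → pb.PublicAction (L.get j) →
      (∀ l : Fin L.length, i < l → l < j → ¬ pb.PublicAction (L.get l)) →
      ∃ ag : Ag, ∀ l : Fin L.length, i < l → l ≤ j → L.get l ∈ pb.A ag)

section Aux

variable {P Ag : Type*}

lemma mem_apply_iff (a : StripsAction P) (s : Set P) (p : P) :
    p ∈ a.apply s ↔ (p ∈ s ∧ p ∉ a.del) ∨ p ∈ a.add := by
  simp [StripsAction.apply]

lemma mem_apply_of_not_varset {a : StripsAction P} {p : P} (h : p ∉ a.varset) (s : Set P) :
    p ∈ a.apply s ↔ p ∈ s := by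
  have hadd : p ∉ a.add := fun hp => h (Or.inl (Or.inr hp))
  have hdel : p ∉ a.del := fun hp => h (Or.inr hp)
  simp [mem_apply_iff, hadd, hdel]

lemma applicable_apply_iff {a b : StripsAction P} (hd : Disjoint a.varset b.varset)
    (s : Set P) : b.Applicable (a.apply s) ↔ b.Applicable s := by
  constructor <;> intro h q hq <;>
    have hq' : q ∉ a.varset := fun hqa =>
      (Set.disjoint_left.mp hd hqa) (Or.inl (Or.inl hq))
  · exact (mem_apply_of_not_varset hq' s).mp (h hq)
  · exact (mem_apply_of_not_varset hq' s).mpr (h hq)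

lemma apply_comm {a b : StripsAction P} (hd : Disjoint a.varset b.varset) (s : Set P) :
    b.apply (a.apply s) = a.apply (b.apply s) := by
  ext p
  by_cases hpa : p ∈ a.varset
  · have hpb : p ∉ b.varset := Set.disjoint_left.mp hd hpa
    have h1 : p ∉ b.add := fun h => hpb (Or.inl (Or.inr h))
    have h2 : p ∉ b.del := fun h => hpb (Or.inr h)
    simp only [StripsAction.apply, Set.mem_union, Set.mem_diff, h1, h2]
    tauto
  · have h1 : p ∉ a.add := fun h => hpa (Or.inl (Or.inr h))
    have h2 : p ∉ a.del := fun h => hpa (Or.inr h)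
    simp only [StripsAction.apply, Set.mem_union, Set.mem_diff, h1, h2]
    tauto

lemma applySeq_append (X Y : List (StripsAction P)) (s : Set P) :
    applySeq (X ++ Y) s = applySeq Y (applySeq X s) := by
  induction X generalizing s with
  | nil => rfl
  | cons a X ih => simp [applySeq, ih]

lemma legalPlan_append (X Y : List (StripsAction P)) (s : Set P) :
    LegalPlan (X ++ Y) s ↔ LegalPlan X s ∧ LegalPlan Y (applySeq X s) := by
  induction X generalizing s with
  | nil => simp [LegalPlan, applySeq]
  | cons a X ih => simp [LegalPlan, applySeq, ih, and_assoc]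

/-- Moving a private-to-everything-in-`B` action `a` past the list `B`. -/
lemma move_past {a : StripsAction P} :
    ∀ (B : List (StripsAction P)) (M : List (StripsAction P)) (s : Set P),
    (∀ b ∈ B, Disjoint a.varset b.varset) →
    LegalPlan (a :: (B ++ M)) s →
    LegalPlan (B ++ a :: M) s ∧ applySeq (B ++ a :: M) s = applySeq (a :: (B ++ M)) s := by
  intro B
  induction B with
  | nil => intro M s _ h; exact ⟨h, rfl⟩
  | cons b B ih =>
    intro M s hd h
    have hdb : Disjoint a.varset b.varset := hd b (by simp)
    obtain ⟨ha, hb, hrest⟩ : a.Applicable s ∧ b.Applicable (a.apply s) ∧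
        LegalPlan (B ++ M) (b.apply (a.apply s)) := h
    have hbs : b.Applicable s := (applicable_apply_iff hdb s).mp hb
    have hcomm : b.apply (a.apply s) = a.apply (b.apply s) := apply_comm hdb s
    have hnext : LegalPlan (a :: (B ++ M)) (b.apply s) := by
      refine ⟨(applicable_apply_iff hdb.symm s).mpr ha, ?_⟩
      rw [← hcomm]; exact hrest
    obtain ⟨h1, h2⟩ := ih M (b.apply s) (fun c hc => hd c (by simp [hc])) hnext
    refine ⟨⟨hbs, h1⟩, ?_⟩
    show applySeq (B ++ a :: M) (b.apply s) = applySeq (B ++ M) (b.apply (a.apply s))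
    calc applySeq (B ++ a :: M) (b.apply s) = applySeq (a :: (B ++ M)) (b.apply s) := h2
      _ = applySeq (B ++ M) (a.apply (b.apply s)) := rfl
      _ = applySeq (B ++ M) (b.apply (a.apply s)) := by rw [hcomm]

/-- Inductive form of the Corollary-1 restrictions. -/
inductive Restr (pb : MAProblem P Ag) : List (StripsAction P) → Prop
  | tail (T : List (StripsAction P)) (h : ∀ a ∈ T, ¬ pb.PublicAction a) : Restr pb T
  | block (ag : Ag) (ys : List (StripsAction P)) (p : StripsAction P)
      (M : List (StripsAction P))
      (hys : ∀ a ∈ ys, ¬ pb.PublicAction a) (hp : pb.PublicAction p)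
      (hag : ∀ a ∈ ys, a ∈ pb.A ag) (hpag : p ∈ pb.A ag) (hM : Restr pb M) :
      Restr pb (ys ++ p :: M)

lemma not_public_of_private {pb : MAProblem P Ag} {a : StripsAction P} {i : Ag}
    (h : pb.PrivateAction a i) : ¬ pb.PublicAction a :=
  fun hp => hp.2 i h

lemma disjoint_varset_of_private {pb : MAProblem P Ag} {a b : StripsAction P} {i ag : Ag}
    (hpriv : pb.PrivateAction a i) (hna : a ∉ pb.A ag) (hb : b ∈ pb.A ag) :
    Disjoint a.varset b.varset := by
  rw [Set.disjoint_left]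
  intro p hpa hpb
  have := hpriv.2 p hpa ag b hb hpb
  exact hna (this ▸ hpriv.1)

/-- Key lemma: a private action can be inserted into a restricted plan. -/
lemma insert_private {pb : MAProblem P Ag} {a : StripsAction P} {i : Ag}
    (hpriv : pb.PrivateAction a i) {L : List (StripsAction P)} (hR : Restr pb L) :
    ∀ s : Set P, LegalPlan (a :: L) s →
    ∃ L', L'.Perm (a :: L) ∧ LegalPlan L' s ∧
      applySeq L' s = applySeq (a :: L) s ∧ Restr pb L' := by
  induction hR with
  | tail T hT =>
    intro s h
    refine ⟨a :: T, List.Perm.refl _, h, rfl, Restr.tail _ ?_⟩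
    intro x hx
    rcases List.mem_cons.mp hx with hx | hx
    · exact hx ▸ not_public_of_private hpriv
    · exact hT x hx
  | block ag ys p M hys hp hag hpag hM ih =>
    intro s h
    by_cases hmem : a ∈ pb.A ag
    · refine ⟨a :: (ys ++ p :: M), List.Perm.refl _, h, rfl, ?_⟩
      have : a :: (ys ++ p :: M) = (a :: ys) ++ p :: M := rfl
      rw [this]
      exact Restr.block ag (a :: ys) p M
        (by
          intro x hx
          rcases List.mem_cons.mp hx with hx | hx
          · exact hx ▸ not_public_of_private hpriv
          · exact hys x hx)
        hp
        (by
          intro x hx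
          rcases List.mem_cons.mp hx with hx | hx
          · exact hx ▸ hmem
          · exact hag x hx)
        hpag hM
    · have hd : ∀ b ∈ ys ++ [p], Disjoint a.varset b.varset := by
        intro b hb
        rcases List.mem_append.mp hb with hb | hb
        · exact disjoint_varset_of_private hpriv hmem (hag b hb)
        · simp at hb
          exact disjoint_varset_of_private hpriv hmem (hb ▸ hpag)
      have hsplit : ys ++ p :: M = (ys ++ [p]) ++ M := by simp
      rw [hsplit] at h
      obtain ⟨h1, h2⟩ := move_past (ys ++ [p]) M s hd h
      rw [legalPlan_append] at h1
      obtain ⟨hB, haM⟩ := h1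
      obtain ⟨M', hperm, hlegal, happ, hR'⟩ := ih (applySeq (ys ++ [p]) s) haM
      refine ⟨ys ++ p :: M', ?_, ?_, ?_, ?_⟩
      · have h3 : (ys ++ p :: M').Perm (ys ++ p :: (a :: M)) :=
          List.Perm.append_left ys (List.Perm.cons p hperm)
        have h4 : ys ++ p :: (a :: M) = (ys ++ [p]) ++ a :: M := by simp
        have h5 : ((ys ++ [p]) ++ a :: M).Perm (a :: ((ys ++ [p]) ++ M)) :=
          List.perm_middle
        have h6 : a :: ((ys ++ [p]) ++ M) = a :: (ys ++ p :: M) := by simp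
        exact h6 ▸ (h3.trans (h4 ▸ h5))
      · have : ys ++ p :: M' = (ys ++ [p]) ++ M' := by simp
        rw [this, legalPlan_append]
        exact ⟨hB, hlegal⟩
      · have e1 : ys ++ p :: M' = (ys ++ [p]) ++ M' := by simp
        rw [e1, applySeq_append, happ]
        calc applySeq (a :: M) (applySeq (ys ++ [p]) s)
            = applySeq ((ys ++ [p]) ++ a :: M) s :=
              (applySeq_append (ys ++ [p]) (a :: M) s).symm
          _ = applySeq (a :: ((ys ++ [p]) ++ M)) s := h2
          _ = applySeq (a :: (ys ++ p :: M)) s := by rw [hsplit]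
      · exact Restr.block ag ys p M' hys hp hag hpag hR'

/-- Every legal plan can be permuted into a restricted legal plan. -/
lemma exists_restr (pb : MAProblem P Ag) :
    ∀ (L : List (StripsAction P)) (s : Set P), (∀ x ∈ L, ∃ k, x ∈ pb.A k) →
    LegalPlan L s →
    ∃ L', L'.Perm L ∧ LegalPlan L' s ∧ applySeq L' s = applySeq L s ∧ Restr pb L' := by
  intro L
  induction L with
  | nil =>
    intro s _ _
    exact ⟨[], List.Perm.refl _, trivial, rfl, Restr.tail [] (by simp)⟩
  | cons a rest ih =>
    intro s hmem hlegal
    obtain ⟨ha, hrest⟩ := hlegal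
    obtain ⟨rest', hperm, hlegal', happ', hR'⟩ :=
      ih (a.apply s) (fun x hx => hmem x (List.mem_cons_of_mem a hx)) hrest
    by_cases hpub : pb.PublicAction a
    · obtain ⟨k, hk⟩ := hmem a (List.mem_cons_self (a := a) (l := rest))
      refine ⟨a :: rest', List.Perm.cons a hperm, ⟨ha, hlegal'⟩, ?_, ?_⟩
      · show applySeq rest' (a.apply s) = applySeq rest (a.apply s)
        exact happ'
      · have : a :: rest' = ([] : List (StripsAction P)) ++ a :: rest' := rfl
        rw [this]
        exact Restr.block k [] a rest' (by simp) hpub (by simp) hk hR'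
    · obtain ⟨k, hk⟩ := hmem a (List.mem_cons_self (a := a) (l := rest))
      have hprivex : ∃ j, pb.PrivateAction a j := by
        by_contra hcon
        push_neg at hcon
        exact hpub ⟨⟨k, hk⟩, hcon⟩
      obtain ⟨j, hj⟩ := hprivex
      have hlegal2 : LegalPlan (a :: rest') s := ⟨ha, hlegal'⟩
      obtain ⟨L', hperm2, hlegal3, happ3, hR3⟩ := insert_private hj hR' s hlegal2
      refine ⟨L', hperm2.trans (List.Perm.cons a hperm), hlegal3, ?_, hR3⟩
      rw [happ3]
      show applySeq rest' (a.apply s) = applySeq rest (a.apply s)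
      exact happ'

lemma getElem_idx_congr {α : Type*} (l : List α) (i j : ℕ)
    (h : i < l.length) (h' : j < l.length) (e : i = j) : l[i] = l[j] := by
  subst e; rfl

lemma getElem_cons_pos {α : Type*} (p : α) (M : List α) (k : ℕ)
    (h : k < M.length + 1) (h2 : 0 < k) : (p :: M)[k] = M[k - 1]'(by omega) := by
  obtain ⟨m, rfl⟩ : ∃ m, k = m + 1 := ⟨k - 1, by omega⟩
  simp

-- getElem helpers for `ys ++ p :: M`
lemma get_apc_small {α : Type*} (ys : List α) (p : α) (M : List α) (k : ℕ)
    (hk : k < ys.length) (h : k < (ys ++ p :: M).length) :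
    (ys ++ p :: M)[k] = ys[k] :=
  List.getElem_append_left hk

lemma get_apc_mid {α : Type*} (ys : List α) (p : α) (M : List α)
    (h : ys.length < (ys ++ p :: M).length) :
    (ys ++ p :: M)[ys.length] = p := by
  rw [List.getElem_append_right le_rfl]
  simp

lemma get_apc_big {α : Type*} (ys : List α) (p : α) (M : List α) (k : ℕ)
    (hk1 : ys.length < k) (hk2 : k < (ys ++ p :: M).length) :
    (ys ++ p :: M)[k] = M[k - ys.length - 1]'(by simp at hk2; omega) := by
  rw [List.getElem_append_right (by omega)]
  exact getElem_cons_pos p M (k - ys.length) (by simp at hk2; omega) (by omega)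

lemma restr_restrictions {pb : MAProblem P Ag} {L : List (StripsAction P)}
    (hR : Restr pb L) : Restrictions pb L := by
  induction hR with
  | tail T hT =>
    constructor
    · intro i hi _
      rw [List.get_eq_getElem] at hi
      exact absurd hi (hT _ (List.getElem_mem _))
    · intro i j _ hi _ _
      rw [List.get_eq_getElem] at hi
      exact absurd hi (hT _ (List.getElem_mem _))
  | block ag ys p M hys hp hag hpag hM ih =>
    set n := ys.length with hn
    have hlen : (ys ++ p :: M).length = n + M.length + 1 := by simp; omega
    have hnlt : n < (ys ++ p :: M).length := by omega
    -- characterization of gets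
    have hget_small : ∀ (k : Fin (ys ++ p :: M).length), (k : ℕ) < n →
        ¬ pb.PublicAction ((ys ++ p :: M).get k) ∧ (ys ++ p :: M).get k ∈ pb.A ag := by
      intro k hk
      rw [List.get_eq_getElem, get_apc_small ys p M k hk k.isLt]
      exact ⟨hys _ (ys.getElem_mem _), hag _ (ys.getElem_mem _)⟩
    have hget_mid : (ys ++ p :: M).get ⟨n, hnlt⟩ = p := by
      rw [List.get_eq_getElem, get_apc_mid ys p M hnlt]
    have hget_big : ∀ (k : Fin (ys ++ p :: M).length) (hk : n < (k : ℕ)),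
        (ys ++ p :: M).get k = M[(k : ℕ) - n - 1]'(by have := k.isLt; omega) := by
      intro k hk
      rw [List.get_eq_getElem, get_apc_big ys p M k hk k.isLt]
    have hget_embed : ∀ (k : ℕ) (hk : k < M.length)
        (hL : n + 1 + k < (ys ++ p :: M).length),
        (ys ++ p :: M).get ⟨n + 1 + k, hL⟩ = M[k] := by
      intro k hk hL
      rw [List.get_eq_getElem, get_apc_big ys p M (n + 1 + k) (by omega) hL]
      exact getElem_idx_congr M _ _ (by omega) hk (by omega)
    constructor
    · -- condition (1)
      intro i hpub hfirst
      have hin : (i : ℕ) = n := by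
        rcases lt_trichotomy (i : ℕ) n with h | h | h
        · exact absurd hpub ((hget_small i h).1)
        · exact h
        · exact absurd (by rw [hget_mid]; exact hp)
            (hfirst ⟨n, hnlt⟩ (by simpa [Fin.lt_def] using h))
      refine ⟨ag, ?_⟩
      intro l hl
      have hl' : (l : ℕ) ≤ n := by
        have := Fin.le_def.mp hl; omega
      rcases lt_or_eq_of_le hl' with h | h
      · exact (hget_small l h).2
      · have : l = ⟨n, hnlt⟩ := Fin.ext h
        rw [this, hget_mid]; exact hpag
    · -- condition (2)
      intro i j hij hpi hpj hbet
      have hjlt : (j : ℕ) < n + M.length + 1 := by rw [← hlen]; exact j.isLt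
      have hilt : (i : ℕ) < n + M.length + 1 := by rw [← hlen]; exact i.isLt
      have hige : n ≤ (i : ℕ) := by
        by_contra h
        push_neg at h
        exact absurd hpi ((hget_small i h).1)
      have hjgt : n < (j : ℕ) := lt_of_le_of_lt hige hij
      rcases eq_or_lt_of_le hige with hin | hin
      · -- i = n : use condition (1) of M at j' = j - n - 1
        have hj' : (j : ℕ) - n - 1 < M.length := by omega
        have hpj' : pb.PublicAction (M.get ⟨(j : ℕ) - n - 1, hj'⟩) := by
          rw [List.get_eq_getElem]
          rw [hget_big j hjgt] at hpj
          exact hpj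
        obtain ⟨ag', hag'⟩ := ih.1 ⟨(j : ℕ) - n - 1, hj'⟩ hpj' (by
          intro l' hl'
          have hlL : n + 1 + (l' : ℕ) < (ys ++ p :: M).length := by
            have := l'.isLt; omega
          have h1 : i < (⟨n + 1 + (l' : ℕ), hlL⟩ : Fin _) := by
            rw [Fin.lt_def]; simp; omega
          have h2 : (⟨n + 1 + (l' : ℕ), hlL⟩ : Fin _) < j := by
            rw [Fin.lt_def]
            have := (Fin.lt_def.mp hl')
            simp at this ⊢
            omega
          have := hbet ⟨n + 1 + (l' : ℕ), hlL⟩ h1 h2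
          rw [hget_embed (l' : ℕ) l'.isLt hlL] at this
          rw [List.get_eq_getElem]
          exact this)
        refine ⟨ag', ?_⟩
        intro l hl1 hl2
        have hlgt : n < (l : ℕ) := by
          have := Fin.lt_def.mp hl1; omega
        have hlle : (l : ℕ) ≤ (j : ℕ) := hl2
        rw [hget_big l hlgt]
        have hl'' : (l : ℕ) - n - 1 < M.length := by have := l.isLt; omega
        have := hag' ⟨(l : ℕ) - n - 1, hl''⟩ (by rw [Fin.le_def]; simp; omega)
        rw [List.get_eq_getElem] at this
        exact this
      · -- i > n : use condition (2) of M
        have hi' : (i : ℕ) - n - 1 < M.length := by omega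
        have hj' : (j : ℕ) - n - 1 < M.length := by omega
        have hpi' : pb.PublicAction (M.get ⟨(i : ℕ) - n - 1, hi'⟩) := by
          rw [List.get_eq_getElem]; rw [hget_big i hin] at hpi; exact hpi
        have hpj' : pb.PublicAction (M.get ⟨(j : ℕ) - n - 1, hj'⟩) := by
          rw [List.get_eq_getElem]; rw [hget_big j hjgt] at hpj; exact hpj
        obtain ⟨ag', hag'⟩ := ih.2 ⟨(i : ℕ) - n - 1, hi'⟩ ⟨(j : ℕ) - n - 1, hj'⟩
          (by rw [Fin.lt_def]; simp; omega) hpi' hpj' (by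
            intro l' hl1 hl2
            have hlL : n + 1 + (l' : ℕ) < (ys ++ p :: M).length := by
              have := l'.isLt; omega
            have h1 : i < (⟨n + 1 + (l' : ℕ), hlL⟩ : Fin _) := by
              rw [Fin.lt_def]
              have := Fin.lt_def.mp hl1
              simp at this ⊢; omega
            have h2 : (⟨n + 1 + (l' : ℕ), hlL⟩ : Fin _) < j := by
              rw [Fin.lt_def]
              have := Fin.lt_def.mp hl2
              simp at this ⊢; omega
            have := hbet ⟨n + 1 + (l' : ℕ), hlL⟩ h1 h2
            rw [hget_embed (l' : ℕ) l'.isLt hlL] at this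
            rw [List.get_eq_getElem]
            exact this)
        refine ⟨ag', ?_⟩
        intro l hl1 hl2
        have hlgt : n < (l : ℕ) := lt_trans hin hl1
        rw [hget_big l hlgt]
        have hl'' : (l : ℕ) - n - 1 < M.length := by have := l.isLt; omega
        have := hag' ⟨(l : ℕ) - n - 1, hl''⟩
          (by rw [Fin.lt_def]; have := Fin.lt_def.mp hl1; simp; omega)
          (by rw [Fin.le_def]; have : (l : ℕ) ≤ (j : ℕ) := hl2; simp; omega)
        rw [List.get_eq_getElem] at this
        exact this

end Aux

/-- every legal plan from `I` (using actions of the problem) can be permuted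
into a legal plan from `I` with the same final state and the same cost that satisfies
the Corollary-1 restrictions. -/
theorem exists_restricted_permutation {P Ag : Type*} [Finite P] (pb : MAProblem P Ag)
    (cost : StripsAction P → ℝ) (L : List (StripsAction P))
    (hmem : ∀ x ∈ L, ∃ k, x ∈ pb.A k)
    (hlegal : LegalPlan L pb.I) :
    ∃ L' : List (StripsAction P), L'.Perm L ∧ LegalPlan L' pb.I ∧
      applySeq L' pb.I = applySeq L pb.I ∧
      planCost cost L' = planCost cost L ∧
      Restrictions pb L' := by
  obtain ⟨L', hperm, hlegal', happ, hR⟩ := exists_restr pb L pb.I hmem hlegal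
  exact ⟨L', hperm, hlegal', happ, by
    unfold planCost
    exact (hperm.map cost).sum_eq, restr_restrictions hR⟩
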